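/- Let V be a real inner product space with a complex structure J (J² = -I, J orthogonal), and let W ⊆ V be a subspace. Suppose for every nonzero X ∈ W, the angle θ between JX and W is a constant θ₁ (i.e., the orthogonal projection φX of JX onto W satisfies ‖φX‖ = cos θ₁ · ‖JX‖). Then φ²X = -(cos²θ₁) X for all X ∈ W. -/

import Mathlib

open scoped RealInnerProductSpace

/-- If `W` is a slant subspace of angle `θ₁` of a real inner product space
with orthogonal complex structure `J` (i.e. `‖φX‖ = cos θ₁ · ‖JX‖` for all nonzero
`X ∈ W`, where `φX` is the orthogonal projection of `JX` onto `W`), then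
`φ²X = -(cos²θ₁) X` for all `X ∈ W`. -/
theorem slant_phi_sq
    {V : Type*} [NormedAddCommGroup V] [InnerProductSpace ℝ V]
    (J : V →ₗ[ℝ] V)
    (hJ2 : ∀ x : V, J (J x) = -x)
    (hJinner : ∀ x y : V, ⟪J x, J y⟫ = ⟪x, y⟫)
    (W : Submodule ℝ V)
    (φ : V → V)
    (hφW : ∀ x ∈ W, φ x ∈ W)
    (hω : ∀ x ∈ W, J x - φ x ∈ Wᗮ)
    (θ₁ : ℝ)
    (hangle : ∀ x ∈ W, x ≠ 0 → ‖φ x‖ = Real.cos θ₁ * ‖J x‖) :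
    ∀ x ∈ W, φ (φ x) = -((Real.cos θ₁) ^ 2) • x := by
  set c := Real.cos θ₁ ^ 2 with hc
  have hskew : ∀ a b : V, ⟪J a, b⟫ = -⟪a, J b⟫ := by
    intro a b
    have h := hJinner a (J b)
    rw [hJ2 b, inner_neg_right] at h
    linarith
  have hnormJ : ∀ x : V, ⟪J x, J x⟫ = ⟪x, x⟫ := fun x => hJinner x x
  have hproj : ∀ x ∈ W, ∀ y ∈ W, ⟪J x, y⟫ = ⟪φ x, y⟫ := by
    intro x hx y hy
    have h0 : ⟪J x - φ x, y⟫ = 0 := by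
      rw [real_inner_comm]
      exact (Submodule.mem_orthogonal W _).mp (hω x hx) y hy
    rw [inner_sub_left] at h0
    linarith
  have hC : ∀ x ∈ W, ⟪φ x, φ x⟫ = c * ⟪x, x⟫ := by
    intro x hx
    by_cases h0 : x = 0
    · subst h0
      have h1 : φ 0 ∈ Wᗮ := by
        have h2 := hω 0 W.zero_mem
        rw [map_zero, zero_sub] at h2
        simpa using Wᗮ.neg_mem h2
      have h3 : ⟪φ 0, φ 0⟫ = 0 :=
        (Submodule.mem_orthogonal W _).mp h1 _ (hφW 0 W.zero_mem)
      rw [h3, inner_zero_left, mul_zero]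
    · have h1 := hangle x hx h0
      have h2 : ‖φ x‖ ^ 2 = (Real.cos θ₁) ^ 2 * ‖J x‖ ^ 2 := by
        rw [h1]; ring
      have h3 : ‖J x‖ ^ 2 = ‖x‖ ^ 2 := by
        rw [← real_inner_self_eq_norm_sq, ← real_inner_self_eq_norm_sq, hnormJ]
      rw [real_inner_self_eq_norm_sq, real_inner_self_eq_norm_sq, h2, h3, hc]
  have hbil : ∀ x ∈ W, ∀ y ∈ W, ⟪φ x, φ y⟫ = c * ⟪x, y⟫ := by
    intro x hx y hy
    have hxy : x + y ∈ W := W.add_mem hx hy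
    have e1 : ∀ z ∈ W, ⟪φ (x + y), φ z⟫ = ⟪φ x, φ z⟫ + ⟪φ y, φ z⟫ := by
      intro z hz
      have hφz := hφW z hz
      rw [← hproj (x + y) hxy _ hφz, map_add, inner_add_left,
          hproj x hx _ hφz, hproj y hy _ hφz]
    have e2 : ∀ z ∈ W, ⟪φ z, φ (x + y)⟫ = ⟪φ z, φ x⟫ + ⟪φ z, φ y⟫ := by
      intro z hz
      rw [real_inner_comm, e1 z hz, real_inner_comm (φ x), real_inner_comm (φ y)]
    have main := hC (x + y) hxy
    rw [e1 (x + y) hxy, e2 x hx, e2 y hy] at main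
    have hx2 := hC x hx
    have hy2 := hC y hy
    have hsym : ⟪φ y, φ x⟫ = ⟪φ x, φ y⟫ := real_inner_comm _ _
    have hinner : ⟪x + y, x + y⟫ = ⟪x, x⟫ + 2 * ⟪x, y⟫ + ⟪y, y⟫ := by
      rw [inner_add_left, inner_add_right, inner_add_right, real_inner_comm y x]; ring
    rw [hinner] at main
    nlinarith [main]
  intro x hx
  have hφx := hφW x hx
  have hv : φ (φ x) + c • x ∈ W := W.add_mem (hφW _ hφx) (W.smul_mem c hx)
  have hzero : ∀ y ∈ W, ⟪φ (φ x) + c • x, y⟫ = 0 := by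
    intro y hy
    have h1 : ⟪φ (φ x), y⟫ = ⟪J (φ x), y⟫ := (hproj (φ x) hφx y hy).symm
    have h2 : ⟪J (φ x), y⟫ = -⟪φ x, J y⟫ := hskew _ _
    have h3 : ⟪φ x, J y⟫ = ⟪φ x, φ y⟫ := by
      have h4 := (Submodule.mem_orthogonal W _).mp (hω y hy) _ hφx
      rw [inner_sub_right] at h4
      linarith
    have h4 := hbil x hx y hy
    rw [inner_add_left, real_inner_smul_left, h1, h2, h3, h4]
    ring
  have hv0 : φ (φ x) + c • x = 0 := by
    have := hzero _ hv
    rwa [inner_self_eq_zero] at this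
  have h5 : φ (φ x) = -(c • x) := eq_neg_of_add_eq_zero_left hv0
  rw [h5, hc, neg_smul]
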